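/- arXiv:2603.12525 — 4 statements merged into one kernel-verified Lean document; each statement's English description precedes it below -/
import Mathlib

section
/- Let q : {1,...,K} → ℝ≥0 with ∑_k q_k = 1 and β ∈ ℝ, and let T_cut > 0 satisfy T_cut = e^{−β} ∑_k max(q_k − T_cut, 0). Then the probability vector ρ* with ρ*_k = (e^{−β}/T_cut) max(q_k − T_cut, 0) minimizes L(ρ) := −∑_k q_k log(1 + e^β ρ_k) over all probability vectors ρ ∈ ℝ^K (ρ_k ≥ 0, ∑_k ρ_k = 1). -/
theorem ebransac_estimator_minimizes (K : ℕ) (hK : 0 < K) (q : Fin K → ℝ)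
    (hq : ∀ k, 0 ≤ q k) (hsum : ∑ k, q k = 1) (β : ℝ)
    (Tcut : ℝ) (hT : 0 < Tcut)
    (hfix : Tcut = Real.exp (-β) * ∑ k, max (q k - Tcut) 0) :
    ∀ ρ : Fin K → ℝ, (∀ k, 0 ≤ ρ k) → (∑ k, ρ k = 1) →
      -(∑ k, q k * Real.log (1 + Real.exp β *
          ((Real.exp (-β) / Tcut) * max (q k - Tcut) 0)))
        ≤ -(∑ k, q k * Real.log (1 + Real.exp β * ρ k)) := by
  intro ρ hρ hρsum
  set E := Real.exp β with hE
  have hEpos : 0 < E := Real.exp_pos β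
  have hEE : E * Real.exp (-β) = 1 := by
    rw [hE, ← Real.exp_add]; simp
  set r : Fin K → ℝ := fun k => (Real.exp (-β) / Tcut) * max (q k - Tcut) 0 with hr
  have hrnn : ∀ k, 0 ≤ r k := fun k =>
    mul_nonneg (div_nonneg (Real.exp_nonneg _) hT.le) (le_max_right _ _)
  have hrsum : ∑ k, r k = 1 := by
    have : ∑ k, r k = (Real.exp (-β) / Tcut) * ∑ k, max (q k - Tcut) 0 := by
      rw [hr, Finset.mul_sum]
    rw [this]
    have hne : Real.exp (-β) ≠ 0 := (Real.exp_pos _).ne'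
    field_simp
    nlinarith [hfix]
  -- key: T * (1 + E * r k) = max (q k) Tcut
  have hTa : ∀ k, Tcut * (1 + E * r k) = Tcut + max (q k - Tcut) 0 := by
    intro k
    have h1 : E * r k = max (q k - Tcut) 0 / Tcut := by
      show E * (Real.exp (-β) / Tcut * max (q k - Tcut) 0) = _
      field_simp
      linear_combination (max (q k - Tcut) 0) * hEE
    rw [h1]
    field_simp
  have key : ∀ k : Fin K, q k * Real.log (1 + E * ρ k) + E * Tcut * r k
      ≤ q k * Real.log (1 + E * r k) + E * Tcut * ρ k := by
    intro k
    set a := 1 + E * r k with ha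
    set x := 1 + E * ρ k with hx
    have hapos : 0 < a := by
      have := mul_nonneg hEpos.le (hrnn k); positivity
    have hxpos : 0 < x := by
      have := mul_nonneg hEpos.le (hρ k); positivity
    have hlog : Real.log x ≤ Real.log a + (x - a) / a := by
      have h1 : Real.log (x / a) ≤ x / a - 1 :=
        Real.log_le_sub_one_of_pos (div_pos hxpos hapos)
      rw [Real.log_div hxpos.ne' hapos.ne'] at h1
      have : x / a - 1 = (x - a) / a := by field_simp
      linarith [this ▸ h1]
    have h2 : q k * Real.log x ≤ q k * Real.log a + (q k * E / a) * (ρ k - r k) := by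
      have := mul_le_mul_of_nonneg_left hlog (hq k)
      have hxa : x - a = E * (ρ k - r k) := by rw [hx, ha]; ring
      calc q k * Real.log x ≤ q k * (Real.log a + (x - a) / a) := this
        _ = q k * Real.log a + (q k * E / a) * (ρ k - r k) := by
            rw [hxa]; field_simp
    -- bound (q k * E / a) * ρ k ≤ E * Tcut * ρ k
    have hqa : q k ≤ Tcut * a := by
      rw [hTa k]
      have := le_max_left (q k - Tcut) 0
      linarith
    have hbound1 : (q k * E / a) * ρ k ≤ E * Tcut * ρ k := by
      have hc : q k * E / a ≤ E * Tcut := by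
        rw [div_le_iff₀ hapos]
        nlinarith [hqa, hEpos]
      exact mul_le_mul_of_nonneg_right hc (hρ k)
    -- equality (q k * E / a) * r k = E * Tcut * r k
    have hbound2 : (q k * E / a) * r k = E * Tcut * r k := by
      rcases le_or_gt (q k) Tcut with hle | hlt
      · have hm : max (q k - Tcut) 0 = 0 := max_eq_right (by linarith)
        have : r k = 0 := by rw [hr]; simp [hm]
        rw [this]; ring
      · have hm : max (q k - Tcut) 0 = q k - Tcut := max_eq_left (by linarith)
        have haq : Tcut * a = q k := by rw [hTa k, hm]; ring
        have hqpos : 0 < q k := lt_trans hT hlt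
        have : q k * E / a = E * Tcut := by
          rw [eq_comm, eq_div_iff hapos.ne']
          nlinarith [haq]
        rw [this]
    nlinarith [h2, hbound1, hbound2]
  have hsumle : ∑ k, (q k * Real.log (1 + E * ρ k) + E * Tcut * r k)
      ≤ ∑ k, (q k * Real.log (1 + E * r k) + E * Tcut * ρ k) :=
    Finset.sum_le_sum fun k _ => key k
  have e1 : ∑ k, E * Tcut * r k = E * Tcut := by
    have h := Finset.mul_sum (Finset.univ : Finset (Fin K)) r (E * Tcut)
    rw [hrsum, mul_one] at h
    exact h.symm
  have e2 : ∑ k, E * Tcut * ρ k = E * Tcut := by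
    have h := Finset.mul_sum (Finset.univ : Finset (Fin K)) ρ (E * Tcut)
    rw [hρsum, mul_one] at h
    exact h.symm
  rw [Finset.sum_add_distrib, Finset.sum_add_distrib, e1, e2] at hsumle
  have main : ∑ k, q k * Real.log (1 + E * ρ k) ≤ ∑ k, q k * Real.log (1 + E * r k) := by
    linarith
  exact neg_le_neg main
end

section
/- Let q : {1,...,K} → ℝ≥0 be a probability vector with T* := max_k q_k > 0, b(T) := ∑_k max(q_k − T, 0), and for each β let T_cut(β) ∈ (0, T*) be the unique solution of T = e^{−β} b(T). Then T_cut is strictly decreasing in β: β_0 < β_1 implies T_cut(β_0) > T_cut(β_1). -/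
theorem Tcut_strictAnti (K : ℕ) (hK : 0 < K) (q : Fin K → ℝ)
    (hq : ∀ k, 0 ≤ q k) (hsum : ∑ k, q k = 1)
    (Tstar : ℝ) (hTstar : IsGreatest (Set.range q) Tstar) (hTpos : 0 < Tstar)
    (Tcut : ℝ → ℝ)
    (hmem : ∀ β, Tcut β ∈ Set.Ioo 0 Tstar)
    (hfix : ∀ β, Tcut β = Real.exp (-β) * ∑ k, max (q k - Tcut β) 0) :
    StrictAnti Tcut := by
  intro β₀ β₁ h
  by_contra hle
  push_neg at hle
  have h1 := (hmem β₁).1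
  have hfix0 := hfix β₀
  have hfix1 := hfix β₁
  have hb : ∑ k, max (q k - Tcut β₁) 0 ≤ ∑ k, max (q k - Tcut β₀) 0 :=
    Finset.sum_le_sum fun k _ => max_le_max (by linarith) le_rfl
  have hbpos : 0 < ∑ k, max (q k - Tcut β₁) 0 := by
    rw [hfix1] at h1
    nlinarith [Real.exp_pos (-β₁)]
  have hexp : Real.exp (-β₁) < Real.exp (-β₀) := Real.exp_lt_exp.mpr (by linarith)
  have h2 : Real.exp (-β₁) * ∑ k, max (q k - Tcut β₁) 0
      < Real.exp (-β₀) * ∑ k, max (q k - Tcut β₁) 0 :=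
    mul_lt_mul_of_pos_right hexp hbpos
  have h3 : Real.exp (-β₀) * ∑ k, max (q k - Tcut β₁) 0
      ≤ Real.exp (-β₀) * ∑ k, max (q k - Tcut β₀) 0 :=
    mul_le_mul_of_nonneg_left hb (Real.exp_pos _).le
  linarith
end

section
/- Let q : {1,...,K} → ℝ≥0 be a probability vector with T* := max_k q_k > 0, and let T_cut(β) ∈ (0, T*) be the unique root of T = e^{−β} ∑_k max(q_k − T, 0). Then T_cut(β) → 0 as β → ∞ and T_cut(β) → T* as β → −∞. -/
theorem Tcut_limits (K : ℕ) (hK : 0 < K) (q : Fin K → ℝ)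
    (hq : ∀ k, 0 ≤ q k) (hsum : ∑ k, q k = 1)
    (Tstar : ℝ) (hTstar : IsGreatest (Set.range q) Tstar) (hTpos : 0 < Tstar)
    (Tcut : ℝ → ℝ)
    (hmem : ∀ β, Tcut β ∈ Set.Ioo 0 Tstar)
    (hfix : ∀ β, Tcut β = Real.exp (-β) * ∑ k, max (q k - Tcut β) 0) :
    Filter.Tendsto Tcut Filter.atTop (nhds 0) ∧
      Filter.Tendsto Tcut Filter.atBot (nhds Tstar) := by
  obtain ⟨hmemr, hub⟩ := hTstar
  obtain ⟨k0, hk0⟩ := hmemr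
  -- upper bound: Tcut β ≤ exp (-β)
  have hup : ∀ β, Tcut β ≤ Real.exp (-β) := by
    intro β
    rw [hfix β]
    have h1 : ∑ k, max (q k - Tcut β) 0 ≤ 1 := by
      rw [← hsum]
      refine Finset.sum_le_sum fun k _ => ?_
      exact max_le (by linarith [(hmem β).1]) (hq k)
    calc Real.exp (-β) * ∑ k, max (q k - Tcut β) 0
        ≤ Real.exp (-β) * 1 :=
          mul_le_mul_of_nonneg_left h1 (Real.exp_pos _).le
      _ = Real.exp (-β) := mul_one _
  -- lower bound: Tstar / (1 + exp β) ≤ Tcut β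
  have hlow : ∀ β, Tstar / (1 + Real.exp β) ≤ Tcut β := by
    intro β
    have hpos : 0 < 1 + Real.exp β := by positivity
    rw [div_le_iff₀ hpos]
    set S := ∑ k, max (q k - Tcut β) 0 with hSdef
    have hS : Tcut β * Real.exp β = S := by
      rw [hfix β, Real.exp_neg]
      field_simp
      exact hSdef.symm
    have hsingle : max (q k0 - Tcut β) 0 ≤ S := by
      rw [hSdef]
      exact Finset.single_le_sum (f := fun k => max (q k - Tcut β) 0) (fun k _ => le_max_right _ _) (Finset.mem_univ k0)
    have hq0 : max (q k0 - Tcut β) 0 = Tstar - Tcut β := by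
      rw [hk0, max_eq_left]
      linarith [(hmem β).2]
    nlinarith [hS, hsingle, hq0]
  constructor
  · refine tendsto_of_tendsto_of_tendsto_of_le_of_le
      (tendsto_const_nhds (x := (0:ℝ)))
      Real.tendsto_exp_neg_atTop_nhds_zero
      (fun β => (hmem β).1.le) hup
  · have h1 : Filter.Tendsto (fun β => Tstar / (1 + Real.exp β))
        Filter.atBot (nhds Tstar) := by
      have : Filter.Tendsto (fun β => 1 + Real.exp β) Filter.atBot (nhds 1) := by
        simpa using (tendsto_const_nhds (x := (1:ℝ))).add Real.tendsto_exp_atBot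
      convert (tendsto_const_nhds (x := Tstar)).div this (by norm_num) using 2
      all_goals simp
    exact tendsto_of_tendsto_of_tendsto_of_le_of_le h1 tendsto_const_nhds
      hlow (fun β => (hmem β).2.le)
end

section
/- Let q : {1,...,K} → ℝ≥0 with ∑_k q_k = 1, β ∈ ℝ, ζ > 0 satisfying ∑_k max(q_k/ζ − e^{−β}, 0) = 1, and define ρ_k := max(q_k/ζ − e^{−β}, 0) and ν_k := ζ − q_k/(ρ_k + e^{−β}). Then the KKT complementarity conditions hold: ρ_k ≥ 0 for all k, ν_k ≥ 0 whenever ρ_k = 0, and ν_k = 0 whenever ρ_k > 0. -/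
theorem kkt_conditions (K : ℕ) (hK : 0 < K) (q : Fin K → ℝ)
    (hq : ∀ k, 0 ≤ q k) (hsum : ∑ k, q k = 1) (β : ℝ)
    (ζ : ℝ) (hζ : 0 < ζ)
    (hnorm : ∑ k, max (q k / ζ - Real.exp (-β)) 0 = 1) :
    ∀ k : Fin K,
      (0 ≤ max (q k / ζ - Real.exp (-β)) 0) ∧
      (max (q k / ζ - Real.exp (-β)) 0 = 0 →
        0 ≤ ζ - q k / (max (q k / ζ - Real.exp (-β)) 0 + Real.exp (-β))) ∧
      (0 < max (q k / ζ - Real.exp (-β)) 0 →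
        ζ - q k / (max (q k / ζ - Real.exp (-β)) 0 + Real.exp (-β)) = 0) := by
  intro k
  have hexp : 0 < Real.exp (-β) := Real.exp_pos _
  refine ⟨le_max_right _ _, ?_, ?_⟩
  · intro h0
    rw [h0, zero_add, sub_nonneg, div_le_iff₀ hexp]
    have : q k / ζ - Real.exp (-β) ≤ 0 := by
      by_contra hc
      push_neg at hc
      rw [max_eq_left hc.le] at h0
      linarith
    have := (div_le_iff₀ hζ).mp (by linarith : q k / ζ ≤ Real.exp (-β))
    linarith [mul_comm ζ (Real.exp (-β))]
  · intro hpos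
    have hc : 0 < q k / ζ - Real.exp (-β) := by
      by_contra hc
      push_neg at hc
      rw [max_eq_right hc] at hpos
      exact lt_irrefl _ hpos
    rw [max_eq_left hc.le, sub_add_cancel]
    have hqk : 0 < q k / ζ := by linarith
    have hq0 : q k ≠ 0 := by
      intro h; rw [h, zero_div] at hqk; linarith
    field_simp
    ring
end
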